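/- Let s be a positive even integer and ℓ ≤ s², and let TC^(s)_{Lag ℓ} : {0,1}^(≤s²) → Γ^(≤s²) be an s²-truncated tree code with ℓ-lagged distance at least δ' whose first s−1 output symbols are empty. Define the (untruncated) tree code TC_{Lag ℓ} : {0,1}^* → (Γ×Γ)^* by, for x ∈ {0,1}^k and position i = j·(s²/2) + r with 0 ≤ r < s²/2, setting TC_{Lag ℓ}(x)_i = (TC^(s)_{Lag ℓ}(x|_{[(j−1)s²/2, i]}), TC^(s)_{Lag ℓ}(x|_{[j·s²/2, i]})) (interleaving fresh copies of the truncated code at intervals of length s²/2). Then TC_{Lag ℓ} is online and has (ℓ, s²/2)-lagged distance at least δ': for all k and all u, v ∈ {0,1}^k with ℓ ≤ k − split(u,v) ≤ s²/2, Δ(TC_{Lag ℓ}(u), TC_{Lag ℓ}(v)) ≥ δ'·(k − split(u,v)). -/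

import Mathlib

/-- **The interleaved (untruncated) code `TC_{Lag ℓ}`.**  Fresh copies of the `s²`-truncated
code `T` are started at every multiple of `H = s²/2`; at position `i`, writing
`i = j·H + r` with `r < H`, the output is the pair consisting of the current symbol of the
copy started at `(j−1)·H` (or `none` when `j = 0`) and the current symbol of the copy
started at `j·H`. -/
def interleaved (s H : ℕ) (hH : 0 < H) (hHs : 2 * H = s * s) {Γ : Type}
    (T : (k : ℕ) → k ≤ s * s → (Fin k → Bool) → (Fin k → Γ))
    (n : ℕ) (x : Fin n → Bool) : Fin n → Option Γ × Γ :=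
  fun i =>
    have hjr : i.val / H * H + i.val % H = i.val := by rw [Nat.mul_comm]; exact Nat.div_add_mod i.val H
    have hrH : i.val % H < H := Nat.mod_lt _ hH
    have hr1 : i.val % H + 1 ≤ s * s := by omega
    have hHr1 : H + i.val % H + 1 ≤ s * s := by omega
    (if hj : 1 ≤ i.val / H then
        have hsub : (i.val / H - 1) * H + H = i.val / H * H := by
          calc (i.val / H - 1) * H + H = (i.val / H - 1 + 1) * H := by ring
            _ = i.val / H * H := by rw [Nat.sub_add_cancel hj]
        some (T (H + i.val % H + 1) hHr1
          (fun q => x ⟨(i.val / H - 1) * H + q.val, by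
            have hq := q.isLt
            have hi := i.isLt
            omega⟩)
          ⟨H + i.val % H, Nat.lt_succ_self _⟩)
      else none,
     T (i.val % H + 1) hr1
       (fun q => x ⟨i.val / H * H + q.val, by
          have hq := q.isLt
          have hi := i.isLt
          omega⟩)
       ⟨i.val % H, Nat.lt_succ_self _⟩)

section Aux
variable (s H : ℕ) (hH : 0 < H) (hHs : 2 * H = s * s) {Γ : Type}
    (T : (k : ℕ) → k ≤ s * s → (Fin k → Bool) → (Fin k → Γ))
    (honline : ∀ (k₁ k₂ : ℕ) (h₁ : k₁ ≤ s * s) (h₂ : k₂ ≤ s * s)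
      (x₁ : Fin k₁ → Bool) (x₂ : Fin k₂ → Bool) (p : ℕ) (hp₁ : p < k₁) (hp₂ : p < k₂),
      (∀ (q : ℕ) (hq : q ≤ p),
        x₁ ⟨q, lt_of_le_of_lt hq hp₁⟩ = x₂ ⟨q, lt_of_le_of_lt hq hp₂⟩) →
      T k₁ h₁ x₁ ⟨p, hp₁⟩ = T k₂ h₂ x₂ ⟨p, hp₂⟩)

include honline

lemma interleaved_snd_eq (n : ℕ) (x : Fin n → Bool) (i : Fin n)
    (k : ℕ) (hk : k ≤ s * s) (a' : ℕ) (ha' : i.val / H * H = a')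
    (hik : i.val % H < k) (hkn : a' + k ≤ n) :
    (interleaved s H hH hHs T n x i).2
      = T k hk (fun q => x ⟨a' + q.val, by have := q.isLt; omega⟩) ⟨i.val % H, hik⟩ := by
  subst ha'
  exact honline _ _ _ _ _ _ (i.val % H) (Nat.lt_succ_self _) hik (fun q hq => rfl)

lemma interleaved_fst_eq (n : ℕ) (x : Fin n → Bool) (i : Fin n)
    (hj : 1 ≤ i.val / H)
    (k : ℕ) (hk : k ≤ s * s) (a' : ℕ) (ha' : (i.val / H - 1) * H = a')
    (hik : H + i.val % H < k) (hkn : a' + k ≤ n) :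
    (interleaved s H hH hHs T n x i).1
      = some (T k hk (fun q => x ⟨a' + q.val, by have := q.isLt; omega⟩) ⟨H + i.val % H, hik⟩) := by
  subst ha'
  simp only [interleaved]
  rw [dif_pos hj]
  exact congrArg some (honline _ _ _ _ _ _ (H + i.val % H) (Nat.lt_succ_self _) hik (fun q hq => rfl))

end Aux

/-- **Step 2: interleaving gives an untruncated `(ℓ, s²/2)`-lagged code.**
Let `s` be a positive even integer, `H = s²/2` (i.e. `2H = s²`), and `ℓ ≤ s²`.  If `T` is an
`s²`-truncated tree code (online, with cross-length-consistent encoding functions) whose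
first `s − 1` output symbols are empty (independent of the input) and whose `ℓ`-lagged
distance is at least `δ'`, then the interleaved code is online and has
`(ℓ, s²/2)`-lagged distance at least `δ'`. -/
theorem interleaved_code_online_and_lagged_distance
    (s H : ℕ) (hs : 0 < s) (hseven : 2 ∣ s) (hH : 0 < H) (hHs : 2 * H = s * s)
    {Γ : Type} [DecidableEq Γ]
    (ℓ : ℕ) (hℓs : ℓ ≤ s * s) (δ' : ℝ)
    (T : (k : ℕ) → k ≤ s * s → (Fin k → Bool) → (Fin k → Γ))
    (honline : ∀ (k₁ k₂ : ℕ) (h₁ : k₁ ≤ s * s) (h₂ : k₂ ≤ s * s)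
      (x₁ : Fin k₁ → Bool) (x₂ : Fin k₂ → Bool) (p : ℕ) (hp₁ : p < k₁) (hp₂ : p < k₂),
      (∀ (q : ℕ) (hq : q ≤ p),
        x₁ ⟨q, lt_of_le_of_lt hq hp₁⟩ = x₂ ⟨q, lt_of_le_of_lt hq hp₂⟩) →
      T k₁ h₁ x₁ ⟨p, hp₁⟩ = T k₂ h₂ x₂ ⟨p, hp₂⟩)
    (hempty : ∀ (k : ℕ) (hk : k ≤ s * s) (x x' : Fin k → Bool) (p : Fin k),
      p.val + 1 < s → T k hk x p = T k hk x' p)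
    (hlag : ∀ (k : ℕ) (hk : k ≤ s * s) (x x' : Fin k → Bool) (m : ℕ) (hm : m < k),
      (∀ i : Fin k, i.val < m → x i = x' i) → x ⟨m, hm⟩ ≠ x' ⟨m, hm⟩ → ℓ ≤ k - m →
      δ' * ((k : ℝ) - m) ≤ (hammingDist (T k hk x) (T k hk x') : ℝ)) :
    (∀ (n : ℕ) (x x' : Fin n → Bool) (i : Fin n),
      (∀ q : Fin n, q ≤ i → x q = x' q) →
      interleaved s H hH hHs T n x i = interleaved s H hH hHs T n x' i) ∧
    (∀ (n : ℕ) (u v : Fin n → Bool) (m : ℕ) (hm : m < n),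
      (∀ i : Fin n, i.val < m → u i = v i) → u ⟨m, hm⟩ ≠ v ⟨m, hm⟩ →
      ℓ ≤ n - m → n - m ≤ H →
      δ' * ((n : ℝ) - m) ≤
        (hammingDist (interleaved s H hH hHs T n u) (interleaved s H hH hHs T n v) : ℝ)) := by
  constructor
  · -- online
    intro n x x' i hagree
    have hjr : i.val / H * H + i.val % H = i.val := by
      rw [Nat.mul_comm]; exact Nat.div_add_mod i.val H
    have hrH : i.val % H < H := Nat.mod_lt _ hH
    simp only [interleaved]
    refine congrArg₂ Prod.mk ?_ ?_
    · by_cases hj : 1 ≤ i.val / H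
      · rw [dif_pos hj, dif_pos hj]
        have hsub : (i.val / H - 1) * H + H = i.val / H * H := by
          calc (i.val / H - 1) * H + H = (i.val / H - 1 + 1) * H := by ring
            _ = i.val / H * H := by rw [Nat.sub_add_cancel hj]
        refine congrArg some (honline _ _ _ _ _ _ (H + i.val % H)
          (Nat.lt_succ_self _) (Nat.lt_succ_self _) (fun q hq => ?_))
        exact hagree _ (by simp only [Fin.le_def]; omega)
      · rw [dif_neg hj, dif_neg hj]
    · refine honline _ _ _ _ _ _ (i.val % H)
        (Nat.lt_succ_self _) (Nat.lt_succ_self _) (fun q hq => ?_)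
      exact hagree _ (by simp only [Fin.le_def]; omega)
  · -- distance
    intro n u v m hm hagree hne hl hnm
    obtain ⟨j0, r0, hr0, hmdm⟩ : ∃ j0 r0, r0 < H ∧ H * j0 + r0 = m :=
      ⟨m / H, m % H, Nat.mod_lt _ hH, Nat.div_add_mod m H⟩
    obtain ⟨a, hadef⟩ : ∃ a, a = H * j0 := ⟨_, rfl⟩
    have ham : a ≤ m := by omega
    have hma : m < a + H := by omega
    obtain ⟨K, hKdef⟩ : ∃ K, K = n - a := ⟨_, rfl⟩
    have haK : a + K = n := by omega
    have hK : K ≤ s * s := by omega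
    have hmK : m - a < K := by omega
    set emb : Fin K → Fin n := fun q => ⟨a + q.val, by have := q.isLt; omega⟩ with hemb
    have hdT := hlag K hK (u ∘ emb) (v ∘ emb) (m - a) hmK
      (fun i hi => hagree (emb i) (by simp only [hemb]; omega))
      (by
        have e : emb ⟨m - a, hmK⟩ = ⟨m, hm⟩ := Fin.ext (by simp only [hemb]; omega)
        simp only [Function.comp_apply, e]
        exact hne)
      (by omega)
    -- pointwise: differences in T copy show up in interleaved
    have hpoint : ∀ p : Fin K, T K hK (u ∘ emb) p ≠ T K hK (v ∘ emb) p →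
        interleaved s H hH hHs T n u (emb p) ≠ interleaved s H hH hHs T n v (emb p) := by
      intro p hTne hcontra
      apply hTne
      have hval : (emb p).val = a + p.val := rfl
      by_cases hpH : p.val < H
      · have hdiv : (emb p).val / H = j0 := by
          rw [hval, hadef, Nat.mul_add_div hH, Nat.div_eq_of_lt hpH]; omega
        have hmod : (emb p).val % H = p.val := by
          rw [hval, hadef, Nat.mul_add_mod, Nat.mod_eq_of_lt hpH]
        have hda : (emb p).val / H * H = a := by rw [hdiv, hadef, Nat.mul_comm]
        have hik : (emb p).val % H < K := by rw [hmod]; exact p.isLt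
        have h2 := congrArg Prod.snd hcontra
        rw [interleaved_snd_eq s H hH hHs T honline n u (emb p) K hK a hda hik (by omega),
            interleaved_snd_eq s H hH hHs T honline n v (emb p) K hK a hda hik (by omega)] at h2
        rw [show (⟨(emb p).val % H, hik⟩ : Fin K) = p from Fin.ext hmod] at h2
        exact h2
      · have hp2H : p.val < 2 * H := by have := p.isLt; omega
        have hsplit : (emb p).val = H * (j0 + 1) + (p.val - H) := by
          have hex : H * (j0 + 1) = H * j0 + H := by ring
          rw [hval, hadef]; omega
        have hdiv : (emb p).val / H = j0 + 1 := by
          rw [hsplit, Nat.mul_add_div hH, Nat.div_eq_of_lt (show p.val - H < H by omega)]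
        have hmod : (emb p).val % H = p.val - H := by
          rw [hsplit, Nat.mul_add_mod, Nat.mod_eq_of_lt (show p.val - H < H by omega)]
        have hj : 1 ≤ (emb p).val / H := by rw [hdiv]; omega
        have hda : ((emb p).val / H - 1) * H = a := by
          rw [hdiv]; simp; rw [hadef, Nat.mul_comm]
        have hik : H + (emb p).val % H < K := by rw [hmod]; have := p.isLt; omega
        have h1 := congrArg Prod.fst hcontra
        rw [interleaved_fst_eq s H hH hHs T honline n u (emb p) hj K hK a hda hik (by omega),
            interleaved_fst_eq s H hH hHs T honline n v (emb p) hj K hK a hda hik (by omega)] at h1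
        have h1' := Option.some.inj h1
        rw [show (⟨H + (emb p).val % H, hik⟩ : Fin K) = p from Fin.ext (show H + (emb p).val % H = p.val by omega)] at h1'
        exact h1'
    -- counting
    have hcard : hammingDist (T K hK (u ∘ emb)) (T K hK (v ∘ emb))
        ≤ hammingDist (interleaved s H hH hHs T n u) (interleaved s H hH hHs T n v) := by
      classical
      unfold hammingDist
      apply Finset.card_le_card_of_injOn emb
      · intro p hp
        simp only [Finset.mem_coe, Finset.mem_filter, Finset.mem_univ, true_and] at *
        exact hpoint p hp
      · intro p _ q _ h
        have := congrArg Fin.val h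
        simp only [hemb] at this
        exact Fin.ext (by omega)
    have hcast : ((K : ℝ) - (m - a : ℕ)) = (n : ℝ) - m := by
      rw [hKdef]
      rw [Nat.cast_sub (by omega), Nat.cast_sub (by omega)]
      ring
    calc δ' * ((n : ℝ) - m) = δ' * ((K : ℝ) - (m - a : ℕ)) := by rw [hcast]
      _ ≤ (hammingDist (T K hK (u ∘ emb)) (T K hK (v ∘ emb)) : ℝ) := hdT
      _ ≤ _ := Nat.cast_le.mpr hcard
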